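/- Let σ be the unique solution in [0, 1) of (π/2 + arcsin σ)·√(1 − σ²) = 1 + σ, and set η̃ := π/2 − √((1 − σ)/(1 + σ)) − arcsin σ. Then for every fixed α with 0 < α < η̃, the equation (π/2 − α − arcsin τ)·√(1 − τ²) = 1 − τ has exactly one solution τ in the interval [0, 1). -/

import Mathlib

open Real Set

private lemma cos_half_pos' {θ : ℝ} (h0 : 0 ≤ θ) (h1 : θ ≤ π / 2) : 0 < Real.cos (θ / 2) := by
  apply Real.cos_pos_of_mem_Ioo
  constructor <;> nlinarith [Real.pi_pos]

private lemma haux_mono : StrictMonoOn (fun θ : ℝ => θ - Real.tan (θ / 2)) (Icc 0 (π / 2)) := by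
  have hcont : ContinuousOn (fun θ : ℝ => θ - Real.tan (θ / 2)) (Icc 0 (π / 2)) := by
    apply continuousOn_id.sub
    apply Real.continuousOn_tan.comp ((continuous_id.div_const 2).continuousOn)
    intro x hx
    exact (cos_half_pos' hx.1 hx.2).ne'
  apply strictMonoOn_of_deriv_pos (convex_Icc _ _) hcont
  intro x hx
  rw [interior_Icc] at hx
  have hc : 0 < Real.cos (x / 2) := cos_half_pos' hx.1.le hx.2.le
  have hder : HasDerivAt (fun θ : ℝ => θ - Real.tan (θ / 2))
      (1 - 1 / Real.cos (x / 2) ^ 2 * (1 / 2)) x := by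
    have ht : HasDerivAt (fun θ : ℝ => Real.tan (θ / 2))
        (1 / Real.cos (x / 2) ^ 2 * (1 / 2)) x := by
      have := (Real.hasDerivAt_tan hc.ne').comp x ((hasDerivAt_id x).div_const 2)
      simpa [Function.comp_def] using this
    simpa [Pi.sub_def] using (hasDerivAt_id x).sub ht
  rw [hder.deriv]
  -- cos (x/2) > cos (π/4) = √2/2, so cos(x/2)^2 > 1/2
  have hlt : Real.cos (π / 4) < Real.cos (x / 2) := by
    apply Real.cos_lt_cos_of_nonneg_of_le_pi (by linarith [hx.1]) (by nlinarith [Real.pi_pos])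
    linarith [hx.2]
  rw [Real.cos_pi_div_four] at hlt
  have h2 : (1 : ℝ) / 2 < Real.cos (x / 2) ^ 2 := by
    nlinarith [Real.sq_sqrt (by norm_num : (2:ℝ) ≥ 0), Real.sqrt_nonneg 2]
  rw [sub_pos]
  rw [div_mul_eq_mul_div, div_lt_one (by positivity)]
  nlinarith

/-- Key equivalence after substitution. -/
private lemma key {θ α : ℝ} (h0 : 0 < θ) (h1 : θ ≤ π / 2) :
    (θ - α) * Real.sin θ = 1 - Real.cos θ ↔ θ - Real.tan (θ / 2) = α := by
  have hs : 0 < Real.sin (θ / 2) :=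
    Real.sin_pos_of_pos_of_lt_pi (by linarith) (by nlinarith [Real.pi_pos])
  have hc : 0 < Real.cos (θ / 2) := cos_half_pos' h0.le h1
  have hsin : Real.sin θ = 2 * Real.sin (θ / 2) * Real.cos (θ / 2) := by
    rw [show θ = 2 * (θ / 2) by ring, Real.sin_two_mul]
    ring_nf
  have hcos : 1 - Real.cos θ = 2 * Real.sin (θ / 2) ^ 2 := by
    have h2 := Real.cos_two_mul (θ / 2)
    rw [show 2 * (θ / 2) = θ by ring] at h2
    have h3 := Real.sin_sq_add_cos_sq (θ / 2)
    nlinarith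
  rw [hsin, hcos, Real.tan_eq_sin_div_cos]
  constructor
  · intro h
    have h4 : (θ - α) * Real.cos (θ / 2) = Real.sin (θ / 2) := by
      have : 2 * Real.sin (θ / 2) * ((θ - α) * Real.cos (θ / 2) - Real.sin (θ / 2)) = 0 := by
        nlinarith
      have h5 := mul_eq_zero.1 this
      rcases h5 with h5 | h5
      · nlinarith
      · linarith
    field_simp
    nlinarith
  · intro h
    have h4 : Real.sin (θ / 2) / Real.cos (θ / 2) = θ - α := by linarith
    have h5 : Real.sin (θ / 2) = (θ - α) * Real.cos (θ / 2) := by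
      field_simp at h4
      linarith
    nlinarith

theorem stmt_11 (σ : ℝ) (hσmem : σ ∈ Set.Ico (0 : ℝ) 1)
    (hσeq : (Real.pi / 2 + Real.arcsin σ) * Real.sqrt (1 - σ ^ 2) = 1 + σ)
    (hσuniq : ∀ σ' ∈ Set.Ico (0 : ℝ) 1,
      (Real.pi / 2 + Real.arcsin σ') * Real.sqrt (1 - σ' ^ 2) = 1 + σ' → σ' = σ)
    (α : ℝ) (hα0 : 0 < α)
    (hα1 : α < Real.pi / 2 - Real.sqrt ((1 - σ) / (1 + σ)) - Real.arcsin σ) :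
    ∃! τ : ℝ, τ ∈ Set.Ico (0 : ℝ) 1 ∧
      (Real.pi / 2 - α - Real.arcsin τ) * Real.sqrt (1 - τ ^ 2) = 1 - τ := by
  obtain ⟨hσ0, hσ1⟩ := hσmem
  -- Step 1 : α < π/2 - 1
  have harc : σ ≤ Real.arcsin σ := by
    have h1 : Real.sin (Real.arcsin σ) = σ := Real.sin_arcsin (by linarith) (by linarith)
    have h2 : (0 : ℝ) ≤ Real.arcsin σ := Real.arcsin_nonneg.2 hσ0
    nlinarith [Real.sin_le h2]
  have hsqrt : 1 - σ ≤ Real.sqrt ((1 - σ) / (1 + σ)) := by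
    rw [Real.le_sqrt (by linarith) (div_nonneg (by linarith) (by linarith))]
    rw [le_div_iff₀ (by linarith)]
    nlinarith
  have hαlt : α < π / 2 - 1 := by linarith
  -- Step 2 : existence of θ ∈ (0, π/2) with θ - tan (θ/2) = α
  have hcont : ContinuousOn (fun θ : ℝ => θ - Real.tan (θ / 2)) (Icc 0 (π / 2)) := by
    apply continuousOn_id.sub
    apply Real.continuousOn_tan.comp ((continuous_id.div_const 2).continuousOn)
    intro x hx
    exact (cos_half_pos' hx.1 hx.2).ne'
  have hmem : α ∈ Ioo ((fun θ : ℝ => θ - Real.tan (θ / 2)) 0)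
      ((fun θ : ℝ => θ - Real.tan (θ / 2)) (π / 2)) := by
    simp only
    rw [show (0 : ℝ) / 2 = 0 by norm_num, Real.tan_zero,
      show π / 2 / 2 = π / 4 by ring, Real.tan_pi_div_four]
    constructor <;> simpa using by linarith
  have hpi : (0 : ℝ) ≤ π / 2 := by positivity
  obtain ⟨θ, hθmem, hθeq⟩ := intermediate_value_Ioo hpi hcont hmem
  obtain ⟨hθ0, hθ1⟩ := hθmem
  simp only at hθeq
  -- properties of τ = cos θ
  have hsinθ : 0 ≤ Real.sin θ := Real.sin_nonneg_of_nonneg_of_le_pi hθ0.le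
    (by nlinarith [Real.pi_pos])
  have hkey := (key hθ0 hθ1.le).2 hθeq
  refine ⟨Real.cos θ, ⟨⟨Real.cos_nonneg_of_mem_Icc ⟨by linarith, hθ1.le⟩, ?_⟩, ?_⟩, ?_⟩
  · -- cos θ < 1
    have h := Real.cos_lt_cos_of_nonneg_of_le_pi le_rfl (by nlinarith [Real.pi_pos]) hθ0
    simpa using h
  · -- the equation
    have ha : Real.arcsin (Real.cos θ) = π / 2 - θ := by
      rw [← Real.sin_pi_div_two_sub, Real.arcsin_sin (by linarith) (by linarith)]
    have hb : Real.sqrt (1 - Real.cos θ ^ 2) = Real.sin θ := by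
      rw [show 1 - Real.cos θ ^ 2 = Real.sin θ ^ 2 by
          nlinarith [Real.sin_sq_add_cos_sq θ], Real.sqrt_sq hsinθ]
    rw [ha, hb, show π / 2 - α - (π / 2 - θ) = θ - α by ring]
    exact hkey
  · -- uniqueness
    rintro τ' ⟨⟨hτ'0, hτ'1⟩, hτ'eq⟩
    obtain ⟨θ', hθ'def⟩ : ∃ t : ℝ, t = π / 2 - Real.arcsin τ' := ⟨_, rfl⟩
    have ha0 : (0 : ℝ) ≤ Real.arcsin τ' := Real.arcsin_nonneg.2 hτ'0
    have ha1 : Real.arcsin τ' < π / 2 := Real.arcsin_lt_pi_div_two.2 hτ'1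
    have hθ'0 : 0 < θ' := by rw [hθ'def]; linarith
    have hθ'1 : θ' ≤ π / 2 := by rw [hθ'def]; linarith
    have hcosθ' : Real.cos θ' = τ' := by
      rw [hθ'def, Real.cos_pi_div_two_sub, Real.sin_arcsin (by linarith) (by linarith)]
    have hsinθ' : 0 ≤ Real.sin θ' := Real.sin_nonneg_of_nonneg_of_le_pi hθ'0.le
      (by linarith [Real.pi_pos])
    have hb : Real.sqrt (1 - τ' ^ 2) = Real.sin θ' := by
      rw [show 1 - τ' ^ 2 = Real.sin θ' ^ 2 by
          nlinarith [Real.sin_sq_add_cos_sq θ'], Real.sqrt_sq hsinθ']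
    rw [hb, show π / 2 - α - Real.arcsin τ' = θ' - α by rw [hθ'def]; ring,
      ← hcosθ'] at hτ'eq
    have hkey' := (key hθ'0 hθ'1).1 hτ'eq
    have : θ' = θ := haux_mono.injOn ⟨hθ'0.le, hθ'1⟩ ⟨hθ0.le, hθ1.le⟩ (by
      simp only [hkey', hθeq])
    rw [← hcosθ', this]
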